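/- Let (W_j, Θ_j) be a gf-orthonormal basis for H with respect to {v_j}, let Λ = (W_j, Λ_j, v_j) be a Parseval g-fusion frame for H, and let V : H → H be the bounded operator V f = Σ_{j∈J} v_j² π_{W_j} Λ_j* Θ_j π_{W_j} f, which satisfies Λ_j π_{W_j} = Θ_j π_{W_j} V* for all j ∈ J. Then V* is an isometry. -/

import Mathlib

open scoped InnerProductSpace
open ContinuousLinearMap

/-- The orthogonal projection of `H` onto the closed subspace `W j`, as a map `H →L[ℂ] H`. -/
noncomputable def gfProj {H : Type*} [NormedAddCommGroup H] [InnerProductSpace ℂ H]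
    {J : Type*} (W : J → Submodule ℂ H) [∀ j, CompleteSpace (W j)] (j : J) : H →L[ℂ] H :=
  (W j).subtypeL.comp ((W j).orthogonalProjectionOnto)

/-- if `Λ` is a Parseval g-fusion frame and `V f = Σ_j v_j² π_{W_j} Λ_j* Θ_j π_{W_j} f`
with `Λ_j π_{W_j} = Θ_j π_{W_j} V*`, where `(W_j, Θ_j)` is a gf-orthonormal basis, then `V*`
is an isometry. -/
theorem gf_parseval_frame_operator_adjoint_isometry
    {H : Type*} [NormedAddCommGroup H] [InnerProductSpace ℂ H] [CompleteSpace H]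
    {J : Type*} [Countable J]
    {Hs : J → Type*} [∀ j, NormedAddCommGroup (Hs j)] [∀ j, InnerProductSpace ℂ (Hs j)]
    [∀ j, CompleteSpace (Hs j)]
    (W : J → Submodule ℂ H) [∀ j, CompleteSpace (W j)]
    (v : J → ℝ) (hv : ∀ j, 0 < v j)
    (Θ : ∀ j, H →L[ℂ] Hs j) (Λ : ∀ j, H →L[ℂ] Hs j)
    (hΘ_orth_eq : ∀ j (g g' : Hs j),
        ⟪v j • gfProj W j (adjoint (Θ j) g), v j • gfProj W j (adjoint (Θ j) g')⟫_ℂ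
          = ⟪g, g'⟫_ℂ)
    (hΘ_orth_ne : ∀ i j, i ≠ j → ∀ (gi : Hs i) (gj : Hs j),
        ⟪v i • gfProj W i (adjoint (Θ i) gi), v j • gfProj W j (adjoint (Θ j) gj)⟫_ℂ = 0)
    (hΘ_parseval : ∀ f : H,
        HasSum (fun j => (v j) ^ 2 * ‖Θ j (gfProj W j f)‖ ^ 2) (‖f‖ ^ 2))
    (hΛ_parseval : ∀ f : H,
        HasSum (fun j => (v j) ^ 2 * ‖Λ j (gfProj W j f)‖ ^ 2) (‖f‖ ^ 2))
    (V : H →L[ℂ] H)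
    (hV : ∀ f : H,
        HasSum (fun j => ((v j) ^ 2 : ℝ) •
          gfProj W j (adjoint (Λ j) (Θ j (gfProj W j f)))) (V f))
    (hVadj : ∀ j (f : H), Λ j (gfProj W j f) = Θ j (gfProj W j (adjoint V f))) :
    ∀ f : H, ‖adjoint V f‖ = ‖f‖ := by
  intro f
  have h1 := hΘ_parseval (adjoint V f)
  have h2 := hΛ_parseval f
  simp only [← hVadj] at h1
  have := h1.unique h2
  have h3 : ‖adjoint V f‖ ^ 2 = ‖f‖ ^ 2 := this
  nlinarith [norm_nonneg (adjoint V f), norm_nonneg f]
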